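/- Correctness of the restricted task construction: let Π be a planning task, s a state in which the fresh atom ε is false, and 𝒜' ⊆ 𝒜 a set of actions. Then a nonempty sequence of actions b₁,…,bₘ of the 𝒜'-restricted task Π_{𝒜'} is a plan for Π_{𝒜'} starting from s if and only if b₁ is the new copy a⁺ of some a ∈ 𝒜', and the sequence obtained by replacing every copy a⁺ by its original a (and keeping original actions unchanged) is a plan for Π starting from s whose first action belongs to 𝒜'. -/

import Mathlib

namespace PS

/-- A ground planning task over atom type `Atom` and action type `Act`. -/
structure GroundTask (Atom Act : Type) where
  pre : Act → Set Atom
  add : Act → Set Atom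
  del : Act → Set Atom
  init : Set Atom
  goal : Set Atom

variable {Atom Act : Type}

/-- `succ(s,a) = (s \ del(a)) ∪ add(a)`. -/
def applyAct (P : GroundTask Atom Act) (s : Set Atom) (a : Act) : Set Atom :=
  (s \ P.del a) ∪ P.add a

/-- `IsPlanFrom P s π`: `π` is a valid plan for `P` starting from state `s`. -/
inductive IsPlanFrom (P : GroundTask Atom Act) : Set Atom → List Act → Prop
  | nil {s : Set Atom} : P.goal ⊆ s → IsPlanFrom P s []
  | cons {s : Set Atom} {a : Act} {l : List Act} :
      P.pre a ⊆ s → IsPlanFrom P (applyAct P s a) l → IsPlanFrom P s (a :: l)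

/-- The `𝒜'`-restricted task `Π_{𝒜'}`. Atoms are `Option Atom`, with the fresh atom
`ε = none` (initially false). Actions are either original actions (`Sum.inl`), which get `ε`
added to their precondition, or new copies `a⁺` (`Sum.inr`) of actions `a ∈ 𝒜'`, which are
identical to `a` except for the additional add effect `ε`. -/
def restrict (P : GroundTask Atom Act) (A' : Set Act) :
    GroundTask (Option Atom) (Act ⊕ {a : Act // a ∈ A'}) where
  pre := fun b => match b with
    | .inl a => insert none (some '' P.pre a)
    | .inr a => some '' P.pre a.val
  add := fun b => match b with
    | .inl a => some '' P.add a
    | .inr a => insert (none : Option Atom) (some '' P.add a.val)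
  del := fun b => match b with
    | .inl a => some '' P.del a
    | .inr a => some '' P.del a.val
  init := some '' P.init
  goal := some '' P.goal

/-- Replace each copy `a⁺` by its original `a`, keeping original actions unchanged. -/
def unrestrict {A' : Set Act} : Act ⊕ {a : Act // a ∈ A'} → Act :=
  Sum.elim id Subtype.val


lemma img_sub_img {A B : Set Atom} : some '' A ⊆ some '' B ↔ A ⊆ B :=
  Set.image_subset_image_iff (Option.some_injective _)

lemma img_sub_insert {A B : Set Atom} : some '' A ⊆ insert none (some '' B) ↔ A ⊆ B := by
  constructor
  · intro h x hx
    rcases h ⟨x, hx, rfl⟩ with h' | ⟨y, hy, hyx⟩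
    · simp at h'
    · cases Option.some_injective _ hyx; exact hy
  · intro h
    exact (Set.image_mono h).trans (Set.subset_insert _ _)

lemma apply_restrict_eq (P : GroundTask Atom Act) (A' : Set Act) (t : Set Atom)
    (b : Act ⊕ {a : Act // a ∈ A'}) :
    applyAct (restrict P A') (insert none (some '' t)) b
      = insert none (some '' applyAct P t (unrestrict b)) := by
  cases b with
  | inl a =>
    ext x; cases x <;>
      simp [applyAct, restrict, unrestrict, Set.mem_image, Set.mem_diff] <;> tauto
  | inr a =>
    ext x; cases x <;>
      simp [applyAct, restrict, unrestrict, Set.mem_image, Set.mem_diff] <;> tauto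

lemma apply_restrict_inr (P : GroundTask Atom Act) (A' : Set Act) (t : Set Atom)
    (a : {a : Act // a ∈ A'}) :
    applyAct (restrict P A') (some '' t) (Sum.inr a)
      = insert none (some '' applyAct P t a.val) := by
  ext x; cases x <;>
    simp [applyAct, restrict, Set.mem_image, Set.mem_diff] <;> tauto

lemma plan_after_eps (P : GroundTask Atom Act) (A' : Set Act) :
    ∀ (l : List (Act ⊕ {a : Act // a ∈ A'})) (t : Set Atom),
    IsPlanFrom (restrict P A') (insert none (some '' t)) l ↔
      IsPlanFrom P t (l.map unrestrict) := by
  intro l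
  induction l with
  | nil =>
    intro t
    constructor
    · rintro (⟨h⟩); exact .nil (img_sub_insert.mp h)
    · rintro (⟨h⟩); exact .nil (img_sub_insert.mpr h)
  | cons b l ih =>
    intro t
    constructor
    · intro h
      cases h with
      | cons hpre hrest =>
        rw [apply_restrict_eq] at hrest
        refine .cons ?_ ((ih _).mp hrest)
        cases b with
        | inl a =>
          exact img_sub_insert.mp (Set.Subset.trans (Set.subset_insert _ _) hpre)
        | inr a => exact img_sub_insert.mp hpre
    · intro h
      cases h with
      | cons hpre hrest =>
        refine .cons ?_ ?_
        · cases b with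
          | inl a =>
            exact Set.insert_subset_insert (img_sub_img.mpr hpre)
          | inr a => exact img_sub_insert.mpr hpre
        · rw [apply_restrict_eq]; exact (ih _).mpr hrest

/-- **Correctness of the restricted task construction**: for a state `s` in which the fresh
atom `ε` is false (embedded as `some '' s`), a nonempty action sequence `bs` is a plan for
`Π_{𝒜'}` starting from `s` iff its first action is the new copy `a⁺` of some `a ∈ 𝒜'` and
the sequence obtained by replacing every copy `a⁺` by its original `a` is a plan for `Π`
starting from `s` whose first action belongs to `𝒜'`. -/
theorem restricted_task_correct {Atom Act : Type} (P : GroundTask Atom Act)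
    (s : Set Atom) (A' : Set Act)
    (bs : List (Act ⊕ {a : Act // a ∈ A'})) (hne : bs ≠ []) :
    IsPlanFrom (restrict P A') (some '' s) bs ↔
      ((∃ a : {a : Act // a ∈ A'}, bs.head? = some (Sum.inr a)) ∧
        IsPlanFrom P s (bs.map unrestrict) ∧
        ∃ a ∈ A', (bs.map unrestrict).head? = some a) := by
  obtain ⟨b, l, rfl⟩ : ∃ b l, bs = b :: l := by
    cases bs with
    | nil => exact absurd rfl hne
    | cons b l => exact ⟨b, l, rfl⟩
  constructor
  · intro h
    cases h with
    | cons hpre hrest =>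
      cases b with
      | inl a =>
        exfalso
        have : (none : Option Atom) ∈ some '' s := hpre (Set.mem_insert _ _)
        simp at this
      | inr a =>
        refine ⟨⟨a, rfl⟩, ?_, a.val, a.prop, rfl⟩
        rw [apply_restrict_inr] at hrest
        exact .cons (img_sub_img.mp hpre) ((plan_after_eps P A' l _).mp hrest)
  · rintro ⟨⟨a, hb⟩, hplan, -⟩
    cases hb
    cases hplan with
    | cons hpre hrest =>
      refine .cons (img_sub_img.mpr hpre) ?_
      rw [apply_restrict_inr]
      exact (plan_after_eps P A' l _).mpr hrest

end PS
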